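/- Let ρ₁, ρ₂, ρ₃ be density matrices on a finite-dimensional Hilbert space H, with unitaries U, V, W satisfying |√ρ₂ √ρ₁| = U √ρ₂ √ρ₁, |√ρ₃ √ρ₁| = V √ρ₃ √ρ₁, |√ρ₃ √ρ₂| = W √ρ₃ √ρ₂ (polar decompositions), and suppose V = U W. Let p₁, p₂, p₃ > 0 with Σ p_i = 1. Then the 3×3 block matrix ρ_AB whose (i,j) block is √(p_i p_j) √ρ_i X_{ij} √ρ_j, where X_{11}=X_{22}=X_{33}=1, X_{12}=U, X_{13}=V, X_{23}=W, X_{ji}=X_{ij}†, is positive semi-definite with trace 1. -/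

import Mathlib

open Matrix Kronecker Finset ComplexOrder

noncomputable section
open scoped Classical

/-- Square root of a matrix: the PSD square root if the matrix is PSD, else 0. -/
def mSqrt {m : Type*} [Fintype m] [DecidableEq m] (A : Matrix m m ℂ) : Matrix m m ℂ :=

  if h : A.PosSemidef then h.1.eigenvectorUnitary.1 * diagonal ((↑) ∘ (Real.sqrt ·) ∘ h.1.eigenvalues) *
    (star h.1.eigenvectorUnitary : Matrix m m ℂ) else 0

/-- Operator absolute value `|A| = √(Aᴴ A)`. -/
def mAbs {m : Type*} [Fintype m] [DecidableEq m] (A : Matrix m m ℂ) : Matrix m m ℂ :=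
  (Matrix.posSemidef_conjTranspose_mul_self A).1.eigenvectorUnitary.1 *
    diagonal ((↑) ∘ (Real.sqrt ·) ∘ (Matrix.posSemidef_conjTranspose_mul_self A).1.eigenvalues) *
    (star (Matrix.posSemidef_conjTranspose_mul_self A).1.eigenvectorUnitary : Matrix m m ℂ)

/-- Von Neumann entropy (base-2), via eigenvalues of a Hermitian matrix. -/
def vnEntropy {m : Type*} [Fintype m] [DecidableEq m] (ρ : Matrix m m ℂ) : ℝ :=
  if h : ρ.IsHermitian then -∑ i, (h.eigenvalues i) * Real.logb 2 (h.eigenvalues i) else 0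

/-- Partial trace over the first tensor factor. -/
def ptraceA {m p : Type*} [Fintype m] [Fintype p] (X : Matrix (m × p) (m × p) ℂ) :
    Matrix p p ℂ := Matrix.of fun a b => ∑ k, X (k, a) (k, b)

/-- Partial trace over the second tensor factor. -/
def ptraceB {m p : Type*} [Fintype m] [Fintype p] (X : Matrix (m × p) (m × p) ℂ) :
    Matrix m m ℂ := Matrix.of fun a b => ∑ k, X (a, k) (b, k)

/-- Fidelity `F(ρ,σ) = (Tr |√ρ √σ|)²`. -/
def fidelity {m : Type*} [Fintype m] [DecidableEq m] (ρ σ : Matrix m m ℂ) : ℝ :=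
  ((mAbs (mSqrt ρ * mSqrt σ)).trace.re) ^ 2
theorem mSqrt_herm_aux {n : ℕ} (A : Matrix (Fin n) (Fin n) ℂ) (h : A.PosSemidef) : (mSqrt A)ᴴ = mSqrt A := by
    simp only [mSqrt, dif_pos h]
    have hd : (diagonal ((↑) ∘ (Real.sqrt ·) ∘ h.1.eigenvalues) : Matrix (Fin n) (Fin n) ℂ)ᴴ
        = diagonal ((↑) ∘ (Real.sqrt ·) ∘ h.1.eigenvalues) := by
      rw [diagonal_conjTranspose]; congr 1; funext k; simp [Complex.conj_ofReal]
    rw [conjTranspose_mul, conjTranspose_mul, hd, ← star_eq_conjTranspose, ← star_eq_conjTranspose,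
      star_star, mul_assoc]
theorem mSqrt_sq_aux {n : ℕ} (A : Matrix (Fin n) (Fin n) ℂ) (h : A.PosSemidef) : mSqrt A * mSqrt A = A := by
    simp only [mSqrt, dif_pos h]
    have hQ : (star h.1.eigenvectorUnitary : Matrix (Fin n) (Fin n) ℂ) * h.1.eigenvectorUnitary.1 = 1 :=
      Unitary.coe_star_mul_self _
    calc _ = h.1.eigenvectorUnitary.1 * (diagonal ((↑) ∘ (Real.sqrt ·) ∘ h.1.eigenvalues) *
          diagonal ((↑) ∘ (Real.sqrt ·) ∘ h.1.eigenvalues)) * (star h.1.eigenvectorUnitary : Matrix (Fin n) (Fin n) ℂ) := by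
          simp only [mul_assoc]; rw [← mul_assoc (star h.1.eigenvectorUnitary : Matrix (Fin n) (Fin n) ℂ), hQ, one_mul]
      _ = A := by
          rw [diagonal_mul_diagonal]
          conv_rhs => rw [h.1.spectral_theorem, Unitary.conjStarAlgAut_apply]
          congr 2; congr 1; funext k
          simp only [Function.comp_apply]
          rw [← Complex.ofReal_mul, Real.mul_self_sqrt (h.eigenvalues_nonneg k)]; rfl

/-- The block matrix with blocks √(pᵢpⱼ) √ρᵢ Xᵢⱼ √ρⱼ (with V = UW) is a density matrix. -/
theorem stmt10 (n : ℕ)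
(ρ : Fin 3 → Matrix (Fin n) (Fin n) ℂ)
    (hρ : ∀ i, (ρ i).PosSemidef ∧ (ρ i).trace = 1)
    (p : Fin 3 → ℝ) (hp : ∀ i, 0 < p i) (hpsum : ∑ i, p i = 1)
    (U V W : Matrix (Fin n) (Fin n) ℂ)
    (hU : U ∈ Matrix.unitaryGroup (Fin n) ℂ)
    (hV : V ∈ Matrix.unitaryGroup (Fin n) ℂ)
    (hW : W ∈ Matrix.unitaryGroup (Fin n) ℂ)
    (hpolU : mAbs (mSqrt (ρ 1) * mSqrt (ρ 0)) = U * (mSqrt (ρ 1) * mSqrt (ρ 0)))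
    (hpolV : mAbs (mSqrt (ρ 2) * mSqrt (ρ 0)) = V * (mSqrt (ρ 2) * mSqrt (ρ 0)))
    (hpolW : mAbs (mSqrt (ρ 2) * mSqrt (ρ 1)) = W * (mSqrt (ρ 2) * mSqrt (ρ 1)))
    (hVUW : V = U * W)
    (ρAB : Matrix (Fin 3 × Fin n) (Fin 3 × Fin n) ℂ)
    (hρAB : ρAB = Matrix.of fun x y : Fin 3 × Fin n =>
      (Real.sqrt (p x.1 * p y.1) : ℂ) *
        (mSqrt (ρ x.1) *
          (![![(1 : Matrix (Fin n) (Fin n) ℂ), U, V], ![Uᴴ, 1, W], ![Vᴴ, Wᴴ, 1]] x.1 y.1) *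
          mSqrt (ρ y.1)) x.2 y.2) :
    ρAB.PosSemidef ∧ ρAB.trace = 1 := by
  have hUu : Uᴴ * U = 1 := hU.1
  have hWu : Wᴴ * W = 1 := hW.1
  set S : Fin 3 → Matrix (Fin n) (Fin n) ℂ := fun i => mSqrt (ρ i) with hS
  have hSherm : ∀ i, (S i)ᴴ = S i := by
    intro i
    simp only [hS, mSqrt, dif_pos (hρ i).1]
    have := mSqrt_herm_aux (ρ i) (hρ i).1
    simp only [mSqrt, dif_pos (hρ i).1] at this
    exact this
  have hSsq : ∀ i, S i * S i = ρ i := by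
    intro i
    simp only [hS, mSqrt, dif_pos (hρ i).1]
    have := mSqrt_sq_aux (ρ i) (hρ i).1
    simp only [mSqrt, dif_pos (hρ i).1] at this
    exact this
  set c : Fin 3 → Matrix (Fin n) (Fin n) ℂ := ![1, U, V] with hc
  have hX : ∀ i j : Fin 3, (![![(1 : Matrix (Fin n) (Fin n) ℂ), U, V], ![Uᴴ, 1, W], ![Vᴴ, Wᴴ, 1]] i j)
      = (c i)ᴴ * c j := by
    intro i j
    fin_cases i <;> fin_cases j
    · simp [hc]
    · simp [hc]
    · simp [hc]
    · simp [hc]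
    · simp [hc]; exact hUu.symm
    · simp [hc, hVUW]; rw [← mul_assoc, hUu, one_mul]
    · simp [hc]
    · simp [hc, hVUW, Matrix.conjTranspose_mul]; rw [mul_assoc, hUu, mul_one]
    · simp [hc, hVUW, Matrix.conjTranspose_mul]
      rw [mul_assoc, ← mul_assoc Uᴴ, hUu, one_mul, hWu]
  have hdiag : ∀ i : Fin 3, (c i)ᴴ * c i = 1 := by
    intro i
    fin_cases i
    · simp [hc]
    · simp [hc]; exact hUu
    · simp [hc, hVUW, Matrix.conjTranspose_mul]
      rw [mul_assoc, ← mul_assoc Uᴴ, hUu, one_mul, hWu]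
  set B : Matrix (Fin n) (Fin 3 × Fin n) ℂ :=
    Matrix.of (fun k x => (Real.sqrt (p x.1) : ℂ) * ((c x.1 * S x.1) k x.2)) with hB
  have key : ∀ i j, (c i * S i)ᴴ * (c j * S j) = S i * ((c i)ᴴ * c j) * S j := by
    intro i j
    rw [Matrix.conjTranspose_mul, hSherm]
    simp only [mul_assoc]
  have hBB : ρAB = Bᴴ * B := by
    rw [hρAB]
    ext x y
    obtain ⟨i, a⟩ := x
    obtain ⟨j, b⟩ := y
    have hs : (Real.sqrt (p i * p j) : ℂ) = (Real.sqrt (p i) : ℂ) * (Real.sqrt (p j) : ℂ) := by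
      rw [← Complex.ofReal_mul, ← Real.sqrt_mul (hp i).le]
    have hR : (Bᴴ * B) (i, a) (j, b)
        = (Real.sqrt (p i) : ℂ) * (Real.sqrt (p j) : ℂ) * (((c i * S i)ᴴ * (c j * S j)) a b) := by
      rw [Matrix.mul_apply, Matrix.mul_apply, Finset.mul_sum]
      refine Finset.sum_congr rfl fun k _ => ?_
      simp only [Matrix.conjTranspose_apply, hB, Matrix.of_apply, star_mul', Complex.star_def,
        Complex.conj_ofReal]
      ring
    rw [hR, key i j, ← hX i j, Matrix.of_apply, hs]
  refine ⟨by rw [hBB]; exact Matrix.posSemidef_conjTranspose_mul_self B, ?_⟩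
  rw [hρAB, Matrix.trace]
  have h1 : ∑ x : Fin 3 × Fin n, (Matrix.of fun x y : Fin 3 × Fin n =>
      (Real.sqrt (p x.1 * p y.1) : ℂ) *
        (mSqrt (ρ x.1) *
          (![![(1 : Matrix (Fin n) (Fin n) ℂ), U, V], ![Uᴴ, 1, W], ![Vᴴ, Wᴴ, 1]] x.1 y.1) *
          mSqrt (ρ y.1)) x.2 y.2).diag x
      = ∑ i : Fin 3, ∑ a : Fin n, (Real.sqrt (p i * p i) : ℂ) *
          (S i * ((c i)ᴴ * c i) * S i) a a := by
    rw [Fintype.sum_prod_type]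
    exact Finset.sum_congr rfl fun i _ => Finset.sum_congr rfl fun a _ => by
      show (Real.sqrt (p i * p i) : ℂ) *
          (mSqrt (ρ i) *
            (![![(1 : Matrix (Fin n) (Fin n) ℂ), U, V], ![Uᴴ, 1, W], ![Vᴴ, Wᴴ, 1]] i i) *
            mSqrt (ρ i)) a a = _
      rw [hX i i]
  rw [h1]
  have h2 : ∀ i : Fin 3, ∑ a : Fin n, (Real.sqrt (p i * p i) : ℂ) *
      (S i * ((c i)ᴴ * c i) * S i) a a = (p i : ℂ) := by
    intro i
    rw [hdiag, mul_one, hSsq, ← Finset.mul_sum]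
    have h3 : ∑ a : Fin n, (ρ i) a a = (ρ i).trace := rfl
    rw [h3, (hρ i).2, mul_one, Real.sqrt_mul_self (hp i).le]
  rw [Finset.sum_congr rfl fun i _ => h2 i, ← Complex.ofReal_sum, hpsum, Complex.ofReal_one]
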